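/- Let E be a type of entities, e_q ∈ E a query entity, S ⊆ E a set (the semantic neighbors of e_q) with e_q ∉ S, d a positive natural number, and r_q, v_a ∈ ℝ^d vectors such that r_q ≠ v_a and every coordinate of r_q and of v_a is nonzero. Define Init²(e_q, e_v, r_q) = 1[e_v = e_q]·r_q + 1[e_v ∈ S]·v_a for each e_v ∈ E. Then Init² satisfies target node distinguishability: for every e_v ∈ E with e_v ≠ e_q, we have Init²(e_q, e_q, r_q) ≠ Init²(e_q, e_v, r_q). -/
import Mathlib

open scoped Classical

/-- The semantic-injected initialization function
`Init²(e_q, e_v, r_q) = 1[e_v = e_q]·r_q + 1[e_v ∈ S]·v_a`. -/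
noncomputable def Init2 {E : Type*} {d : ℕ} (e_q : E) (S : Set E)
    (r_q v_a : Fin d → ℝ) (e_v : E) : Fin d → ℝ :=
  (if e_v = e_q then r_q else 0) + (if e_v ∈ S then v_a else 0)

theorem init2_target_node_distinguishability {E : Type*} (e_q : E) (S : Set E)
    (hS : e_q ∉ S) (d : ℕ) (hd : 0 < d) (r_q v_a : Fin d → ℝ)
    (hne : r_q ≠ v_a) (hr : ∀ i : Fin d, r_q i ≠ 0)
    (hv : ∀ i : Fin d, v_a i ≠ 0) :
    ∀ e_v : E, e_v ≠ e_q →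
      Init2 e_q S r_q v_a e_q ≠ Init2 e_q S r_q v_a e_v := by
  intro e_v hvq
  unfold Init2
  simp only [if_pos rfl, if_neg hS, if_neg hvq, add_zero, zero_add]
  by_cases h : e_v ∈ S
  · simpa [h] using hne
  · simp only [if_neg h]
    intro hcontra
    exact hr ⟨0, hd⟩ (congrFun hcontra ⟨0, hd⟩)
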